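/- Let m be a nonzero complex number and u a complex number. Let G = [[m, 1], [0, m⁻¹]] and H = [[m, 0], [u, m⁻¹]] be 2×2 complex matrices. Then G·H·G = H·G·H if and only if u + m² − 1 + m⁻² = 0 (the Riley polynomial condition of the trefoil knot). -/

import Mathlib

/-- Riley polynomial condition for the trefoil: for `G = [[m,1],[0,m⁻¹]]` and
`H = [[m,0],[u,m⁻¹]]`, the braid relation `GHG = HGH` holds iff
`u + m² − 1 + m⁻² = 0`. -/
theorem rileyTrefoil (m u : ℂ) (hm : m ≠ 0)
    (G H : Matrix (Fin 2) (Fin 2) ℂ)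
    (hG : G = !![m, 1; 0, m⁻¹]) (hH : H = !![m, 0; u, m⁻¹]) :
    G * H * G = H * G * H ↔ u + m ^ 2 - 1 + (m ^ 2)⁻¹ = 0 := by
  subst hG hH
  have him : m * m⁻¹ = 1 := mul_inv_cancel₀ hm
  rw [← Matrix.ext_iff]
  simp only [Fin.forall_fin_two, Matrix.mul_apply, Fin.sum_univ_two,
    Matrix.cons_val', Matrix.cons_val_zero, Matrix.cons_val_one, Matrix.head_cons,
    Matrix.empty_val', Matrix.cons_val_fin_one, Matrix.head_fin_const, Matrix.of_apply]
  constructor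
  · rintro ⟨⟨-, h01⟩, -⟩
    field_simp at h01 ⊢
    linear_combination h01
  · intro h
    field_simp at h
    refine ⟨⟨?_, ?_⟩, ?_, ?_⟩ <;> field_simp <;> ring_nf
    · linear_combination h
    · linear_combination -u * h
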